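/- Let G be a graph, v ∈ V(G), and let G_v^{(ℓ)} denote the graph obtained by attaching a path on ℓ vertices to v (joining v by an edge to one endpoint of the path). If D(G,x), D(G_v^{(1)},x), D(G_v^{(2)},x), D(G_v^{(3)},x) are unimodal with modes μ_0, μ_1, μ_2, μ_3 satisfying 0 ≤ μ_i − μ_{i−1} ≤ 1 for i ∈ {1,2,3}, then D(G_v^{(ℓ)},x) is unimodal for all natural numbers ℓ. -/
import Mathlib


/-- A finite set of vertices dominates the graph. -/
def Dominates {V : Type*} (G : SimpleGraph V) (U : Finset V) : Prop :=
  ∀ v : V, v ∈ U ∨ ∃ u ∈ U, G.Adj u v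

/-- The number of dominating sets of size `i`. -/
noncomputable def domCount {V : Type*} [Fintype V] (G : SimpleGraph V) (i : ℕ) : ℕ :=
  Nat.card {U : Finset V // U.card = i ∧ Dominates G U}

/-- The coefficient sequence is non-decreasing up to `k` and non-increasing afterwards,
so in particular `k` is a mode. -/
def UnimodalWithMode (d : ℕ → ℕ) (k : ℕ) : Prop :=
  (∀ i < k, d i ≤ d (i + 1)) ∧ (∀ i, k ≤ i → d (i + 1) ≤ d i)

/-- Unimodality of a coefficient sequence. -/
def UnimodalSeq (d : ℕ → ℕ) : Prop := ∃ k, UnimodalWithMode d k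

/-- The asymmetric adjacency relation for `G` with a path on `l` vertices attached at `v`. -/
def pathAttachRel {V : Type*} (G : SimpleGraph V) (v : V) (l : ℕ) :
    (V ⊕ Fin l) → (V ⊕ Fin l) → Prop
  | .inl a, .inl b => G.Adj a b
  | .inl a, .inr i => a = v ∧ (i : ℕ) = 0
  | .inr i, .inr j => (i : ℕ) + 1 = (j : ℕ)
  | _, _ => False

/-- The graph `G_v^{(l)}`: `G` together with a path on `l` vertices, one endpoint of which
is joined by an edge to `v`. -/
def pathAttach {V : Type*} (G : SimpleGraph V) (v : V) (l : ℕ) : SimpleGraph (V ⊕ Fin l) :=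
  SimpleGraph.fromRel (pathAttachRel G v l)

section AuxUnimodalPathAttach

variable {V : Type*} {G : SimpleGraph V} {v : V}

lemma pa_adj_inl_inl {l : ℕ} {a b : V} :
    (pathAttach G v l).Adj (.inl a) (.inl b) ↔ G.Adj a b := by
  simp only [pathAttach, SimpleGraph.fromRel_adj, pathAttachRel]
  constructor
  · rintro ⟨h, h1 | h2⟩
    · exact h1
    · exact h2.symm
  · intro h; exact ⟨by simp [G.ne_of_adj h], Or.inl h⟩

lemma pa_adj_inl_inr {l : ℕ} {a : V} {i : Fin l} :
    (pathAttach G v l).Adj (.inl a) (.inr i) ↔ a = v ∧ (i : ℕ) = 0 := by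
  simp [pathAttach, SimpleGraph.fromRel_adj, pathAttachRel]

lemma pa_adj_inr_inl {l : ℕ} {a : V} {i : Fin l} :
    (pathAttach G v l).Adj (.inr i) (.inl a) ↔ a = v ∧ (i : ℕ) = 0 := by
  rw [SimpleGraph.adj_comm]; exact pa_adj_inl_inr

lemma pa_adj_inr_inr {l : ℕ} {i j : Fin l} :
    (pathAttach G v l).Adj (.inr i) (.inr j) ↔ ((i:ℕ) + 1 = j ∨ (j:ℕ) + 1 = i) := by
  simp only [pathAttach, SimpleGraph.fromRel_adj, pathAttachRel]
  constructor
  · rintro ⟨h, h1⟩; exact h1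
  · rintro (h | h)
    · exact ⟨by simp [Fin.ext_iff]; omega, Or.inl h⟩
    · exact ⟨by simp [Fin.ext_iff]; omega, Or.inr h⟩

def pemb (V : Type*) {k l : ℕ} (h : k ≤ l) : (V ⊕ Fin k) ↪ (V ⊕ Fin l) :=
  (Function.Embedding.refl V).sumMap (Fin.castLEEmb h)

@[simp] lemma pemb_inl {k l : ℕ} (h : k ≤ l) (a : V) : pemb V h (.inl a) = .inl a := rfl

@[simp] lemma pemb_inr {k l : ℕ} (h : k ≤ l) (i : Fin k) :
    pemb V h (.inr i) = .inr (Fin.castLE h i) := rfl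

lemma pa_adj_pemb {k l : ℕ} (h : k ≤ l) (a b : V ⊕ Fin k) :
    (pathAttach G v l).Adj (pemb V h a) (pemb V h b) ↔ (pathAttach G v k).Adj a b := by
  rcases a with a | i <;> rcases b with b | j
  · simp [pa_adj_inl_inl]
  · simp [pa_adj_inl_inr]
  · simp [pa_adj_inr_inl]
  · simp [pa_adj_inr_inr]

lemma exists_map_eq {α β : Type*} (f : α ↪ β) (s : Finset β)
    (hs : ∀ b ∈ s, ∃ a, f a = b) : ∃ t : Finset α, t.map f = s := by
  classical
  induction s using Finset.induction with
  | empty => exact ⟨∅, rfl⟩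
  | @insert b s hb ih =>
    obtain ⟨t, ht⟩ := ih (fun b hb => hs b (Finset.mem_insert_of_mem hb))
    obtain ⟨a, ha⟩ := hs b (Finset.mem_insert_self _ _)
    exact ⟨insert a t, by rw [Finset.map_insert, ha, ht]⟩

-- domination transfer: forward direction
lemma map_dominates_aux {k l : ℕ} (h : k ≤ l) {T : Finset (V ⊕ Fin k)}
    (hT : Dominates (pathAttach G v k) T) (t : V ⊕ Fin k) :
    pemb V h t ∈ T.map (pemb V h) ∨
      ∃ u ∈ T.map (pemb V h), (pathAttach G v l).Adj u (pemb V h t) := by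
  rcases hT t with ht | ⟨u, hu, hadj⟩
  · exact Or.inl (Finset.mem_map_of_mem _ ht)
  · exact Or.inr ⟨pemb V h u, Finset.mem_map_of_mem _ hu, (pa_adj_pemb h u t).2 hadj⟩

-- domination transfer: backward direction
lemma dominates_preimage {k l : ℕ} (h : k ≤ l) {T : Finset (V ⊕ Fin k)}
    {U : Finset (V ⊕ Fin l)}
    (hU : Dominates (pathAttach G v l) U)
    (hmem : ∀ t : V ⊕ Fin k, pemb V h t ∈ U → t ∈ T)
    (hextra : ∀ u ∈ U, u ∉ T.map (pemb V h) → ∀ t : V ⊕ Fin k,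
      (pathAttach G v l).Adj u (pemb V h t) →
      (t ∈ T ∨ ∃ u' ∈ T, (pathAttach G v k).Adj u' t)) :
    Dominates (pathAttach G v k) T := by
  intro t
  rcases hU (pemb V h t) with ht | ⟨u, hu, hadj⟩
  · exact Or.inl (hmem t ht)
  · by_cases hum : u ∈ T.map (pemb V h)
    · obtain ⟨u', hu', rfl⟩ := Finset.mem_map.1 hum
      exact Or.inr ⟨u', hu', (pa_adj_pemb h u' t).1 hadj⟩
    · exact hextra u hu hum t hadj

/-! ### Tail vertices -/

def Z (V : Type*) (n : ℕ) : V ⊕ Fin (n+3) := .inr ⟨n+2, by omega⟩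
def Y (V : Type*) (n : ℕ) : V ⊕ Fin (n+3) := .inr ⟨n+1, by omega⟩
def X (V : Type*) (n : ℕ) : V ⊕ Fin (n+3) := .inr ⟨n, by omega⟩
def Wv {V : Type*} (v : V) (n : ℕ) : V ⊕ Fin (n+3) :=
  if n = 0 then .inl v else .inr ⟨n-1, by omega⟩

variable {n : ℕ}

lemma adj_Z {u : V ⊕ Fin (n+3)} :
    (pathAttach G v (n+3)).Adj u (Z V n) ↔ u = Y V n := by
  rcases u with a | j
  · simp [Z, Y, pa_adj_inl_inr]
  · simp only [Z, Y, pa_adj_inr_inr, Sum.inr.injEq, Fin.ext_iff]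
    have := j.isLt; constructor
    · rintro (h | h) <;> omega
    · intro h; omega

lemma adj_Y {u : V ⊕ Fin (n+3)} :
    (pathAttach G v (n+3)).Adj u (Y V n) ↔ u = X V n ∨ u = Z V n := by
  rcases u with a | j
  · simp [X, Y, Z, pa_adj_inl_inr]
  · simp only [X, Y, Z, pa_adj_inr_inr, Sum.inr.injEq, Fin.ext_iff]
    have := j.isLt; constructor
    · rintro (h | h) <;> omega
    · rintro (h | h) <;> omega

lemma adj_X {u : V ⊕ Fin (n+3)} :
    (pathAttach G v (n+3)).Adj u (X V n) ↔ u = Wv v n ∨ u = Y V n := by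
  rcases u with a | j
  · simp only [X, Y, Wv, pa_adj_inl_inr]
    rcases Nat.eq_zero_or_pos n with hn | hn
    · subst hn; simp
    · have hn' : n ≠ 0 := by omega
      simp only [if_neg hn']
      constructor
      · rintro ⟨_, h⟩; exact absurd h hn'
      · rintro (h | h) <;> simp_all
  · simp only [X, Y, Wv, pa_adj_inr_inr, Sum.inr.injEq, Fin.ext_iff]
    have := j.isLt
    rcases Nat.eq_zero_or_pos n with hn | hn
    · subst hn; simp only [if_pos rfl]
      constructor
      · rintro (h | h)
        · omega
        · right; omega
      · rintro (h | h)
        · exact absurd h (by simp)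
        · omega
    · have hn' : n ≠ 0 := by omega
      simp only [if_neg hn']
      constructor
      · rintro (h | h)
        · left; simp [Sum.inr.injEq, Fin.ext_iff]; omega
        · right; omega
      · rintro (h | h)
        · simp only [Sum.inr.injEq, Fin.ext_iff] at h; omega
        · omega

lemma adj_WvX : (pathAttach G v (n+3)).Adj (Wv v n) (X V n) := by
  rcases Nat.eq_zero_or_pos n with hn | hn
  · subst hn; simp [Wv, X, pa_adj_inl_inr]
  · have hn' : n ≠ 0 := by omega
    simp only [Wv, X, if_neg hn', pa_adj_inr_inr]
    left; omega

/-! ### Membership in mapped sets -/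

lemma inr_val_lt_of_mem_map {k l : ℕ} {h : k ≤ l} {T : Finset (V ⊕ Fin k)} {j : Fin l}
    (hj : (.inr j : V ⊕ Fin l) ∈ T.map (pemb V h)) : (j : ℕ) < k := by
  obtain ⟨t, _, ht⟩ := Finset.mem_map.1 hj
  rcases t with a | t
  · simp [pemb] at ht
  · rw [pemb_inr] at ht
    cases ht
    exact t.isLt

lemma notmem_map {k l : ℕ} {h : k ≤ l} {T : Finset (V ⊕ Fin k)} {j : Fin l}
    (hj : k ≤ (j : ℕ)) : (.inr j : V ⊕ Fin l) ∉ T.map (pemb V h) :=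
  fun hm => absurd (inr_val_lt_of_mem_map hm) (by omega)

lemma card_insert_map [DecidableEq V] {k l : ℕ} (h : k ≤ l) (T : Finset (V ⊕ Fin k)) {j : Fin l}
    (hj : k ≤ (j : ℕ)) :
    (insert (.inr j : V ⊕ Fin l) (T.map (pemb V h))).card = T.card + 1 := by
  classical
  rw [Finset.card_insert_of_notMem (notmem_map hj), Finset.card_map]

/-- The last vertex of an attached path is dominated by itself or its predecessor. -/
lemma last_mem {m : ℕ} {T : Finset (V ⊕ Fin (m+1))}
    (hd : Dominates (pathAttach G v (m+1)) T) :
    (.inr ⟨m, by omega⟩ : V ⊕ Fin (m+1)) ∈ T ∨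
      (if m = 0 then Sum.inl v else .inr ⟨m-1, by omega⟩) ∈ T := by
  rcases hd (.inr ⟨m, by omega⟩) with h | ⟨u, hu, hadj⟩
  · exact Or.inl h
  · right
    rcases u with a | j
    · rw [pa_adj_inl_inr] at hadj
      obtain ⟨rfl, h0⟩ := hadj
      have : m = 0 := h0
      simp only [this, if_pos rfl]
      exact hu
    · rw [pa_adj_inr_inr] at hadj
      have := j.isLt
      have hm : m ≠ 0 := by omega
      have : j = ⟨m-1, by omega⟩ := by
        apply Fin.ext
        simp only [Fin.val_mk] at hadj ⊢
        omega
      rw [if_neg hm]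
      exact this ▸ hu

lemma exists_pemb_inl {k l : ℕ} (h : k ≤ l) (a : V) :
    ∃ t, pemb V h t = (.inl a : V ⊕ Fin l) := ⟨.inl a, rfl⟩

lemma exists_pemb_inr {k l : ℕ} (h : k ≤ l) {j : Fin l} (hj : (j : ℕ) < k) :
    ∃ t, pemb V h t = (.inr j : V ⊕ Fin l) :=
  ⟨.inr ⟨j, hj⟩, by simp [Fin.ext_iff]⟩

lemma dom_insert_old [DecidableEq V] {k l : ℕ} (h : k ≤ l) {T : Finset (V ⊕ Fin k)}
    (hT : Dominates (pathAttach G v k) T) (q t' : V ⊕ Fin l)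
    (ht' : ∃ t, pemb V h t = t') :
    t' ∈ insert q (T.map (pemb V h)) ∨
      ∃ u ∈ insert q (T.map (pemb V h)), (pathAttach G v l).Adj u t' := by
  obtain ⟨t, rfl⟩ := ht'
  rcases map_dominates_aux h hT t with hm | ⟨u, hu, hadj⟩
  · exact Or.inl (Finset.mem_insert_of_mem hm)
  · exact Or.inr ⟨u, Finset.mem_insert_of_mem hu, hadj⟩

lemma inr_eq_Z {j : Fin (n+3)} (hj : (j : ℕ) = n + 2) : (.inr j : V ⊕ Fin (n+3)) = Z V n := by
  simp only [Z, Sum.inr.injEq, Fin.ext_iff]; exact hj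

lemma inr_eq_Y {j : Fin (n+3)} (hj : (j : ℕ) = n + 1) : (.inr j : V ⊕ Fin (n+3)) = Y V n := by
  simp only [Y, Sum.inr.injEq, Fin.ext_iff]; exact hj

lemma inr_eq_X {j : Fin (n+3)} (hj : (j : ℕ) = n) : (.inr j : V ⊕ Fin (n+3)) = X V n := by
  simp only [X, Sum.inr.injEq, Fin.ext_iff]; exact hj

lemma domA [DecidableEq V] {T : Finset (V ⊕ Fin (n+2))}
    (hT : Dominates (pathAttach G v (n+2)) T) :
    Dominates (pathAttach G v (n+3))
      (insert (Z V n) (T.map (pemb V (by omega : n+2 ≤ n+3)))) := by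
  intro t
  rcases t with a | j
  · exact dom_insert_old _ hT _ _ (exists_pemb_inl _ a)
  · by_cases hj : (j : ℕ) < n + 2
    · exact dom_insert_old _ hT _ _ (exists_pemb_inr _ hj)
    · rw [inr_eq_Z (by have := j.isLt; omega)]
      exact Or.inl (Finset.mem_insert_self _ _)

lemma domB [DecidableEq V] {T : Finset (V ⊕ Fin (n+1))}
    (hT : Dominates (pathAttach G v (n+1)) T) :
    Dominates (pathAttach G v (n+3))
      (insert (Y V n) (T.map (pemb V (by omega : n+1 ≤ n+3)))) := by
  intro t
  rcases t with a | j
  · exact dom_insert_old _ hT _ _ (exists_pemb_inl _ a)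
  · by_cases hj : (j : ℕ) < n + 1
    · exact dom_insert_old _ hT _ _ (exists_pemb_inr _ hj)
    · by_cases hj2 : (j : ℕ) = n + 1
      · rw [inr_eq_Y hj2]
        exact Or.inl (Finset.mem_insert_self _ _)
      · rw [inr_eq_Z (by have := j.isLt; omega)]
        exact Or.inr ⟨Y V n, Finset.mem_insert_self _ _, adj_Z.2 rfl⟩

lemma domCtrue [DecidableEq V] {T : Finset (V ⊕ Fin n)}
    (hT : Dominates (pathAttach G v n) T)
    (hw : Wv v n ∈ T.map (pemb V (by omega : n ≤ n+3))) :
    Dominates (pathAttach G v (n+3))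
      (insert (Z V n) (T.map (pemb V (by omega : n ≤ n+3)))) := by
  intro t
  rcases t with a | j
  · exact dom_insert_old _ hT _ _ (exists_pemb_inl _ a)
  · by_cases hj : (j : ℕ) < n
    · exact dom_insert_old _ hT _ _ (exists_pemb_inr _ hj)
    · by_cases hj2 : (j : ℕ) = n
      · rw [inr_eq_X hj2]
        exact Or.inr ⟨Wv v n, Finset.mem_insert_of_mem hw, adj_WvX⟩
      · by_cases hj3 : (j : ℕ) = n + 1
        · rw [inr_eq_Y hj3]
          exact Or.inr ⟨Z V n, Finset.mem_insert_self _ _, adj_Y.2 (Or.inr rfl)⟩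
        · rw [inr_eq_Z (by have := j.isLt; omega)]
          exact Or.inl (Finset.mem_insert_self _ _)

lemma domCfalse [DecidableEq V] {T : Finset (V ⊕ Fin n)}
    (hT : Dominates (pathAttach G v n) T) :
    Dominates (pathAttach G v (n+3))
      (insert (Y V n) (T.map (pemb V (by omega : n ≤ n+3)))) := by
  intro t
  rcases t with a | j
  · exact dom_insert_old _ hT _ _ (exists_pemb_inl _ a)
  · by_cases hj : (j : ℕ) < n
    · exact dom_insert_old _ hT _ _ (exists_pemb_inr _ hj)
    · by_cases hj2 : (j : ℕ) = n
      · rw [inr_eq_X hj2]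
        exact Or.inr ⟨Y V n, Finset.mem_insert_self _ _, adj_X.2 (Or.inr rfl)⟩
      · by_cases hj3 : (j : ℕ) = n + 1
        · rw [inr_eq_Y hj3]
          exact Or.inl (Finset.mem_insert_self _ _)
        · rw [inr_eq_Z (by have := j.isLt; omega)]
          exact Or.inr ⟨Y V n, Finset.mem_insert_self _ _, adj_Z.2 rfl⟩

lemma pemb_inr_eq {k l : ℕ} (h : k ≤ l) {j : Fin k} {j' : Fin l} (hjj : (j : ℕ) = (j' : ℕ)) :
    pemb V h (.inr j) = (.inr j' : V ⊕ Fin l) := by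
  simp [Fin.ext_iff, hjj]

lemma pemb_ne_inr_of_ge {k l : ℕ} {h : k ≤ l} (t : V ⊕ Fin k) {j : Fin l} (hj : k ≤ (j : ℕ)) :
    pemb V h t ≠ .inr j := by
  rcases t with a | t
  · simp
  · simp only [pemb_inr, ne_eq, Sum.inr.injEq, Fin.ext_iff]
    have := t.isLt
    simp only [Fin.coe_castLE]
    omega

lemma Z_ne_Y : Z V n ≠ Y V n := by simp [Z, Y, Fin.ext_iff]
lemma X_ne_Y : X V n ≠ Y V n := by simp [X, Y, Fin.ext_iff]
lemma X_ne_Z : X V n ≠ Z V n := by simp [X, Z, Fin.ext_iff]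
lemma Wv_ne_Y : Wv v n ≠ Y V n := by
  rcases Nat.eq_zero_or_pos n with hn | hn
  · subst hn; simp [Wv, Y]
  · simp only [Wv, if_neg (by omega : ¬ n = 0), Y]
    simp [Fin.ext_iff]

lemma factsA [DecidableEq V] {T : Finset (V ⊕ Fin (n+2))}
    (hd : Dominates (pathAttach G v (n+2)) T) :
    Y V n ∈ T.map (pemb V (by omega : n+2 ≤ n+3)) ∨
      X V n ∈ T.map (pemb V (by omega : n+2 ≤ n+3)) := by
  rcases last_mem (m := n+1) hd with h | h
  · exact Or.inl (Finset.mem_map.2 ⟨_, h, pemb_inr_eq _ (by simp [Y])⟩)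
  · rw [if_neg (by omega : ¬ n + 1 = 0)] at h
    exact Or.inr (Finset.mem_map.2 ⟨_, h, pemb_inr_eq _ (by simp [X])⟩)

def wvs (v : V) (n : ℕ) : V ⊕ Fin (n+1) :=
  if n = 0 then Sum.inl v else .inr ⟨n-1, by omega⟩

lemma pemb_wvs : pemb V (by omega : n+1 ≤ n+3) (wvs v n) = Wv v n := by
  rcases Nat.eq_zero_or_pos n with hn | hn
  · subst hn; simp [wvs, Wv]
  · simp only [wvs, Wv, if_neg (by omega : ¬ n = 0)]
    exact pemb_inr_eq _ rfl

lemma factsB [DecidableEq V] {T : Finset (V ⊕ Fin (n+1))}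
    (hd : Dominates (pathAttach G v (n+1)) T) :
    X V n ∈ T.map (pemb V (by omega : n+1 ≤ n+3)) ∨
      Wv v n ∈ T.map (pemb V (by omega : n+1 ≤ n+3)) := by
  rcases last_mem (m := n) hd with h | h
  · exact Or.inl (Finset.mem_map.2 ⟨_, h, pemb_inr_eq _ (by simp [X])⟩)
  · right
    refine Finset.mem_map.2 ⟨wvs v n, ?_, pemb_wvs⟩
    rcases Nat.eq_zero_or_pos n with hn | hn
    · subst hn; rw [if_pos rfl] at h; simpa [wvs] using h
    · rw [if_neg (by omega : ¬ n = 0)] at h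
      simpa [wvs, if_neg (by omega : ¬ n = 0)] using h

lemma adj_small_wvs_x :
    (pathAttach G v (n+1)).Adj (wvs v n) (.inr ⟨n, by omega⟩) := by
  rcases Nat.eq_zero_or_pos n with hn | hn
  · subst hn; simp [wvs, pa_adj_inl_inr]
  · simp only [wvs, if_neg (by omega : ¬ n = 0), pa_adj_inr_inr]
    left; omega

lemma Wv_ne_Z : Wv v n ≠ Z V n := by
  rcases Nat.eq_zero_or_pos n with hn | hn
  · subst hn; simp [Wv, Z]
  · simp only [Wv, if_neg (by omega : ¬ n = 0), Z]
    simp [Fin.ext_iff]; omega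

lemma mem_of_pemb_mem {k l : ℕ} {h : k ≤ l} {T : Finset (V ⊕ Fin k)} {t : V ⊕ Fin k}
    (hm : pemb V h t ∈ T.map (pemb V h)) : t ∈ T := (Finset.mem_map' _).1 hm

lemma inr_mem_small {k l : ℕ} {h : k ≤ l} {T : Finset (V ⊕ Fin k)} {j : Fin l}
    (hj : (j : ℕ) < k) (hm : (.inr j : V ⊕ Fin l) ∈ T.map (pemb V h)) :
    (.inr ⟨j, hj⟩ : V ⊕ Fin k) ∈ T := by
  apply mem_of_pemb_mem (h := h)
  rwa [pemb_inr_eq h (j' := j) rfl]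

lemma pemb_ne_Z {k : ℕ} (t : V ⊕ Fin k) (h : k ≤ n+3) (hk : k ≤ n+2) :
    pemb V h t ≠ Z V n := by
  have hz : Z V n = (.inr ⟨n+2, by omega⟩ : V ⊕ Fin (n+3)) := rfl
  rw [hz]
  exact pemb_ne_inr_of_ge t (by simpa using hk)

lemma pemb_ne_Y {k : ℕ} (t : V ⊕ Fin k) (h : k ≤ n+3) (hk : k ≤ n+1) :
    pemb V h t ≠ Y V n := by
  have hy : Y V n = (.inr ⟨n+1, by omega⟩ : V ⊕ Fin (n+3)) := rfl
  rw [hy]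
  exact pemb_ne_inr_of_ge t (by simpa using hk)

lemma pemb_ne_X {k : ℕ} (t : V ⊕ Fin k) (h : k ≤ n+3) (hk : k ≤ n) :
    pemb V h t ≠ X V n := by
  have hx : X V n = (.inr ⟨n, by omega⟩ : V ⊕ Fin (n+3)) := rfl
  rw [hx]
  exact pemb_ne_inr_of_ge t (by simpa using hk)

lemma wv_mem_small {h : n+1 ≤ n+3} {T : Finset (V ⊕ Fin (n+1))}
    (hm : Wv v n ∈ T.map (pemb V h)) : wvs v n ∈ T :=
  mem_of_pemb_mem (by rwa [pemb_wvs])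

lemma pemb_eq_Y_elim {h : n+2 ≤ n+3} {t : V ⊕ Fin (n+2)}
    (he : pemb V h t = Y V n) : t = .inr ⟨n+1, by omega⟩ := by
  rcases t with a | t
  · exact absurd he (by simp [Y])
  · simp only [pemb_inr, Y, Sum.inr.injEq, Fin.ext_iff, Fin.coe_castLE] at he
    simp only [Sum.inr.injEq, Fin.ext_iff]
    exact he

lemma pemb_eq_X_elim {h : n+1 ≤ n+3} {t : V ⊕ Fin (n+1)}
    (he : pemb V h t = X V n) : t = .inr ⟨n, by omega⟩ := by
  rcases t with a | t
  · exact absurd he (by simp [X])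
  · simp only [pemb_inr, X, Sum.inr.injEq, Fin.ext_iff, Fin.coe_castLE] at he
    simp only [Sum.inr.injEq, Fin.ext_iff]
    exact he

lemma surjA [DecidableEq V] {U : Finset (V ⊕ Fin (n+3))}
    (hdom : Dominates (pathAttach G v (n+3)) U)
    (hYX : Y V n ∈ U ∨ X V n ∈ U) :
    ∃ T : Finset (V ⊕ Fin (n+2)),
      T.map (pemb V (by omega : n+2 ≤ n+3)) = U.erase (Z V n) ∧
      Dominates (pathAttach G v (n+2)) T := by
  obtain ⟨T, hT⟩ := exists_map_eq (pemb V (by omega : n+2 ≤ n+3)) (U.erase (Z V n)) (by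
    intro b hb
    obtain ⟨hbne, hbU⟩ := Finset.mem_erase.1 hb
    rcases b with a | j
    · exact ⟨.inl a, rfl⟩
    · refine exists_pemb_inr _ ?_
      have := j.isLt
      rcases lt_or_ge (j : ℕ) (n+2) with h | h
      · exact h
      · exact absurd (inr_eq_Z (by omega)) hbne)
  refine ⟨T, hT, ?_⟩
  refine dominates_preimage (by omega) hdom ?_ ?_
  · intro t ht
    have hne := pemb_ne_Z (n := n) t (by omega) (by omega)
    exact mem_of_pemb_mem (hT ▸ Finset.mem_erase.2 ⟨hne, ht⟩)
  · intro u huU hunm t hadj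
    have hu : u = Z V n := by
      by_contra hne
      exact hunm (hT ▸ Finset.mem_erase.2 ⟨hne, huU⟩)
    subst hu
    have hty : pemb V _ t = Y V n := adj_Z.1 hadj.symm
    have ht : t = .inr ⟨n+1, by omega⟩ := pemb_eq_Y_elim hty
    subst ht
    rcases hYX with hY | hX
    · left
      exact inr_mem_small (by simp [Y]) (hT ▸ Finset.mem_erase.2 ⟨Ne.symm Z_ne_Y, hY⟩)
    · right
      refine ⟨.inr ⟨n, by omega⟩, inr_mem_small (by simp [X])
        (hT ▸ Finset.mem_erase.2 ⟨X_ne_Z, hX⟩), ?_⟩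
      rw [pa_adj_inr_inr]
      left; simp

lemma surjB [DecidableEq V] {U : Finset (V ⊕ Fin (n+3))}
    (hdom : Dominates (pathAttach G v (n+3)) U)
    (hZ : Z V n ∉ U) (hY : Y V n ∈ U) (hXW : X V n ∈ U ∨ Wv v n ∈ U) :
    ∃ T : Finset (V ⊕ Fin (n+1)),
      T.map (pemb V (by omega : n+1 ≤ n+3)) = U.erase (Y V n) ∧
      Dominates (pathAttach G v (n+1)) T := by
  obtain ⟨T, hT⟩ := exists_map_eq (pemb V (by omega : n+1 ≤ n+3)) (U.erase (Y V n)) (by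
    intro b hb
    obtain ⟨hbne, hbU⟩ := Finset.mem_erase.1 hb
    rcases b with a | j
    · exact ⟨.inl a, rfl⟩
    · refine exists_pemb_inr _ ?_
      have := j.isLt
      rcases lt_or_ge (j : ℕ) (n+1) with h | h
      · exact h
      · rcases lt_or_ge (j : ℕ) (n+2) with h2 | h2
        · exact absurd (inr_eq_Y (by omega)) hbne
        · exact absurd (inr_eq_Z (j := j) (by omega) ▸ hbU) hZ)
  refine ⟨T, hT, ?_⟩
  refine dominates_preimage (by omega) hdom ?_ ?_
  · intro t ht
    have hne := pemb_ne_Y (n := n) t (by omega) (by omega)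
    exact mem_of_pemb_mem (hT ▸ Finset.mem_erase.2 ⟨hne, ht⟩)
  · intro u huU hunm t hadj
    have hu : u = Y V n := by
      by_contra hne
      exact hunm (hT ▸ Finset.mem_erase.2 ⟨hne, huU⟩)
    subst hu
    have hty : pemb V _ t = X V n ∨ pemb V _ t = Z V n := adj_Y.1 hadj.symm
    rcases hty with hty | hty
    · have ht : t = .inr ⟨n, by omega⟩ := pemb_eq_X_elim hty
      subst ht
      rcases hXW with hX | hW
      · left
        exact inr_mem_small (by simp [X]) (hT ▸ Finset.mem_erase.2 ⟨X_ne_Y, hX⟩)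
      · right
        exact ⟨wvs v n, wv_mem_small (hT ▸ Finset.mem_erase.2 ⟨Wv_ne_Y, hW⟩),
          adj_small_wvs_x⟩
    · exact absurd hty (pemb_ne_Z (n := n) t (by omega) (by omega))

lemma surjCtrue [DecidableEq V] {U : Finset (V ⊕ Fin (n+3))}
    (hdom : Dominates (pathAttach G v (n+3)) U)
    (hZ : Z V n ∈ U) (hY : Y V n ∉ U) (hX : X V n ∉ U) :
    (Wv v n ∈ U) ∧
    ∃ T : Finset (V ⊕ Fin n),
      T.map (pemb V (by omega : n ≤ n+3)) = U.erase (Z V n) ∧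
      Dominates (pathAttach G v n) T := by
  have hWv : Wv v n ∈ U := by
    rcases hdom (X V n) with h | ⟨u, hu, hadj⟩
    · exact absurd h hX
    · rcases adj_X.1 hadj with rfl | rfl
      · exact hu
      · exact absurd hu hY
  refine ⟨hWv, ?_⟩
  obtain ⟨T, hT⟩ := exists_map_eq (pemb V (by omega : n ≤ n+3)) (U.erase (Z V n)) (by
    intro b hb
    obtain ⟨hbne, hbU⟩ := Finset.mem_erase.1 hb
    rcases b with a | j
    · exact ⟨.inl a, rfl⟩
    · refine exists_pemb_inr _ ?_
      have := j.isLt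
      rcases lt_or_ge (j : ℕ) n with h | h
      · exact h
      · rcases lt_or_ge (j : ℕ) (n+1) with h1 | h1
        · exact absurd (inr_eq_X (j := j) (by omega) ▸ hbU) hX
        · rcases lt_or_ge (j : ℕ) (n+2) with h2 | h2
          · exact absurd (inr_eq_Y (j := j) (by omega) ▸ hbU) hY
          · exact absurd (inr_eq_Z (by omega)) hbne)
  refine ⟨T, hT, ?_⟩
  refine dominates_preimage (by omega) hdom ?_ ?_
  · intro t ht
    have hne := pemb_ne_Z (n := n) t (by omega) (by omega)
    exact mem_of_pemb_mem (hT ▸ Finset.mem_erase.2 ⟨hne, ht⟩)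
  · intro u huU hunm t hadj
    have hu : u = Z V n := by
      by_contra hne
      exact hunm (hT ▸ Finset.mem_erase.2 ⟨hne, huU⟩)
    subst hu
    have hty : pemb V _ t = Y V n := adj_Z.1 hadj.symm
    exact absurd hty (pemb_ne_Y (n := n) t (by omega) (by omega))

lemma surjCfalse [DecidableEq V] {U : Finset (V ⊕ Fin (n+3))}
    (hdom : Dominates (pathAttach G v (n+3)) U)
    (hZ : Z V n ∉ U) (hY : Y V n ∈ U) (hX : X V n ∉ U) (hW : Wv v n ∉ U) :
    ∃ T : Finset (V ⊕ Fin n),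
      T.map (pemb V (by omega : n ≤ n+3)) = U.erase (Y V n) ∧
      Dominates (pathAttach G v n) T := by
  obtain ⟨T, hT⟩ := exists_map_eq (pemb V (by omega : n ≤ n+3)) (U.erase (Y V n)) (by
    intro b hb
    obtain ⟨hbne, hbU⟩ := Finset.mem_erase.1 hb
    rcases b with a | j
    · exact ⟨.inl a, rfl⟩
    · refine exists_pemb_inr _ ?_
      have := j.isLt
      rcases lt_or_ge (j : ℕ) n with h | h
      · exact h
      · rcases lt_or_ge (j : ℕ) (n+1) with h1 | h1
        · exact absurd (inr_eq_X (j := j) (by omega) ▸ hbU) hX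
        · rcases lt_or_ge (j : ℕ) (n+2) with h2 | h2
          · exact absurd (inr_eq_Y (by omega)) hbne
          · exact absurd (inr_eq_Z (j := j) (by omega) ▸ hbU) hZ)
  refine ⟨T, hT, ?_⟩
  refine dominates_preimage (by omega) hdom ?_ ?_
  · intro t ht
    have hne := pemb_ne_Y (n := n) t (by omega) (by omega)
    exact mem_of_pemb_mem (hT ▸ Finset.mem_erase.2 ⟨hne, ht⟩)
  · intro u huU hunm t hadj
    have hu : u = Y V n := by
      by_contra hne
      exact hunm (hT ▸ Finset.mem_erase.2 ⟨hne, huU⟩)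
    subst hu
    rcases adj_Y.1 hadj.symm with hty | hty
    · exact absurd hty (pemb_ne_X (n := n) t (by omega) (by omega))
    · exact absurd hty (pemb_ne_Z (n := n) t (by omega) (by omega))

lemma Z_notmem_map {k : ℕ} {h : k ≤ n+3} {T : Finset (V ⊕ Fin k)} (hk : k ≤ n+2) :
    Z V n ∉ T.map (pemb V h) := fun hm => by
  have h1 := inr_val_lt_of_mem_map (V := V) (j := (⟨n+2, by omega⟩ : Fin (n+3))) hm
  have h2 : (n+2 : ℕ) < k := h1
  omega

lemma Y_notmem_map {k : ℕ} {h : k ≤ n+3} {T : Finset (V ⊕ Fin k)} (hk : k ≤ n+1) :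
    Y V n ∉ T.map (pemb V h) := fun hm => by
  have h1 := inr_val_lt_of_mem_map (V := V) (j := (⟨n+1, by omega⟩ : Fin (n+3))) hm
  have h2 : (n+1 : ℕ) < k := h1
  omega

lemma X_notmem_map {k : ℕ} {h : k ≤ n+3} {T : Finset (V ⊕ Fin k)} (hk : k ≤ n) :
    X V n ∉ T.map (pemb V h) := fun hm => by
  have h1 := inr_val_lt_of_mem_map (V := V) (j := (⟨n, by omega⟩ : Fin (n+3))) hm
  have h2 : (n : ℕ) < k := h1
  omega

lemma Z_notmem_insert_Y [DecidableEq V] {k : ℕ} {h : k ≤ n+3} {T : Finset (V ⊕ Fin k)}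
    (hk : k ≤ n+2) : Z V n ∉ insert (Y V n) (T.map (pemb V h)) := by
  simp only [Finset.mem_insert]
  rintro (h1 | h2)
  · exact Z_ne_Y h1
  · exact Z_notmem_map hk h2

lemma Y_notmem_insert_Z [DecidableEq V] {k : ℕ} {h : k ≤ n+3} {T : Finset (V ⊕ Fin k)}
    (hk : k ≤ n+1) : Y V n ∉ insert (Z V n) (T.map (pemb V h)) := by
  simp only [Finset.mem_insert]
  rintro (h1 | h2)
  · exact Z_ne_Y h1.symm
  · exact Y_notmem_map hk h2

lemma X_notmem_insert_Z [DecidableEq V] {k : ℕ} {h : k ≤ n+3} {T : Finset (V ⊕ Fin k)}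
    (hk : k ≤ n) : X V n ∉ insert (Z V n) (T.map (pemb V h)) := by
  simp only [Finset.mem_insert]
  rintro (h1 | h2)
  · exact X_ne_Z h1
  · exact X_notmem_map hk h2

lemma X_notmem_insert_Y [DecidableEq V] {k : ℕ} {h : k ≤ n+3} {T : Finset (V ⊕ Fin k)}
    (hk : k ≤ n) : X V n ∉ insert (Y V n) (T.map (pemb V h)) := by
  simp only [Finset.mem_insert]
  rintro (h1 | h2)
  · exact X_ne_Y h1
  · exact X_notmem_map hk h2

lemma domCount_zero [Fintype V] (G : SimpleGraph V) (v : V) (l : ℕ) :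
    domCount (pathAttach G v l) 0 = 0 := by
  have : IsEmpty {U : Finset (V ⊕ Fin l) // U.card = 0 ∧ Dominates (pathAttach G v l) U} := by
    constructor
    rintro ⟨U, hc, hd⟩
    rw [Finset.card_eq_zero] at hc
    subst hc
    rcases hd (.inl v) with h | ⟨u, hu, _⟩
    · simp at h
    · simp at hu
  exact Nat.card_of_isEmpty

lemma domCount_rec [Fintype V] (G : SimpleGraph V) (v : V) (n i : ℕ) :
    domCount (pathAttach G v (n+3)) (i+1) =
      domCount (pathAttach G v (n+2)) i + domCount (pathAttach G v (n+1)) i +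
        domCount (pathAttach G v n) i := by
  classical
  let MA := {U : Finset (V ⊕ Fin (n+2)) // U.card = i ∧ Dominates (pathAttach G v (n+2)) U}
  let MB := {U : Finset (V ⊕ Fin (n+1)) // U.card = i ∧ Dominates (pathAttach G v (n+1)) U}
  let MC := {U : Finset (V ⊕ Fin n) // U.card = i ∧ Dominates (pathAttach G v n) U}
  let M := {U : Finset (V ⊕ Fin (n+3)) // U.card = i + 1 ∧ Dominates (pathAttach G v (n+3)) U}
  let Φ : MA ⊕ MB ⊕ MC → M := fun p =>
    match p with
    | .inl T => ⟨insert (Z V n) (T.1.map (pemb V (by omega : n+2 ≤ n+3))),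
        by rw [Finset.card_insert_of_notMem (Z_notmem_map (by omega)), Finset.card_map, T.2.1],
        domA T.2.2⟩
    | .inr (.inl T) => ⟨insert (Y V n) (T.1.map (pemb V (by omega : n+1 ≤ n+3))),
        by rw [Finset.card_insert_of_notMem (Y_notmem_map (by omega)), Finset.card_map, T.2.1],
        domB T.2.2⟩
    | .inr (.inr T) =>
        ⟨insert (if Wv v n ∈ T.1.map (pemb V (by omega : n ≤ n+3)) then Z V n else Y V n)
          (T.1.map (pemb V (by omega : n ≤ n+3))),
        by
          split_ifs
          · rw [Finset.card_insert_of_notMem (Z_notmem_map (by omega)), Finset.card_map, T.2.1]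
          · rw [Finset.card_insert_of_notMem (Y_notmem_map (by omega)), Finset.card_map, T.2.1],
        by
          split_ifs with hw
          · exact domCtrue T.2.2 hw
          · exact domCfalse T.2.2⟩
  have hinj : Function.Injective Φ := by
    intro p q h
    have hval := Subtype.ext_iff.1 h
    rcases p with T | T | T <;> rcases q with T' | T' | T'
    · -- A A
      simp only [Φ] at hval
      have hmm : T.1.map (pemb V (by omega : n+2 ≤ n+3)) =
          T'.1.map (pemb V (by omega : n+2 ≤ n+3)) := by
        have h1 := congrArg (fun s => Finset.erase s (Z V n)) hval
        simpa only [Finset.erase_insert (Z_notmem_map (n := n) (k := n+2) (h := by omega) (T := T.1) (by omega)),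
          Finset.erase_insert (Z_notmem_map (n := n) (k := n+2) (h := by omega) (T := T'.1) (by omega))] using h1
      exact congrArg Sum.inl (Subtype.ext (Finset.map_injective _ hmm))
    · -- A B
      exfalso
      simp only [Φ] at hval
      have hZp : Z V n ∈ insert (Y V n) (T'.1.map (pemb V (by omega : n+1 ≤ n+3))) :=
        hval ▸ Finset.mem_insert_self _ _
      exact Z_notmem_insert_Y (by omega) hZp
    · -- A C
      exfalso
      simp only [Φ] at hval
      split_ifs at hval with hw
      · rcases factsA T.2.2 with hY | hX
        · exact Y_notmem_insert_Z (by omega) (hval ▸ Finset.mem_insert_of_mem hY)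
        · exact X_notmem_insert_Z (by omega) (hval ▸ Finset.mem_insert_of_mem hX)
      · exact Z_notmem_insert_Y (by omega) (hval ▸ Finset.mem_insert_self _ _)
    · -- B A
      exfalso
      simp only [Φ] at hval
      have hZp : Z V n ∈ insert (Y V n) (T.1.map (pemb V (by omega : n+1 ≤ n+3))) :=
        hval.symm ▸ Finset.mem_insert_self _ _
      exact Z_notmem_insert_Y (by omega) hZp
    · -- B B
      simp only [Φ] at hval
      have hmm : T.1.map (pemb V (by omega : n+1 ≤ n+3)) =
          T'.1.map (pemb V (by omega : n+1 ≤ n+3)) := by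
        have h1 := congrArg (fun s => Finset.erase s (Y V n)) hval
        simpa only [Finset.erase_insert (Y_notmem_map (n := n) (k := n+1) (h := by omega) (T := T.1) (by omega)),
          Finset.erase_insert (Y_notmem_map (n := n) (k := n+1) (h := by omega) (T := T'.1) (by omega))] using h1
      exact congrArg (Sum.inr ∘ Sum.inl) (Subtype.ext (Finset.map_injective _ hmm))
    · -- B C
      exfalso
      simp only [Φ] at hval
      split_ifs at hval with hw
      · exact Z_notmem_insert_Y (by omega) (hval.symm ▸ Finset.mem_insert_self _ _)
      · rcases factsB T.2.2 with hX | hW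
        · exact X_notmem_insert_Y (by omega) (hval ▸ Finset.mem_insert_of_mem hX)
        · have : Wv v n ∈ insert (Y V n) (T'.1.map (pemb V (by omega : n ≤ n+3))) :=
            hval ▸ Finset.mem_insert_of_mem hW
          rcases Finset.mem_insert.1 this with h1 | h2
          · exact Wv_ne_Y h1
          · exact hw h2
    · -- C A
      exfalso
      simp only [Φ] at hval
      split_ifs at hval with hw
      · rcases factsA T'.2.2 with hY | hX
        · exact Y_notmem_insert_Z (by omega) (hval.symm ▸ Finset.mem_insert_of_mem hY)
        · exact X_notmem_insert_Z (by omega) (hval.symm ▸ Finset.mem_insert_of_mem hX)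
      · exact Z_notmem_insert_Y (by omega) (hval.symm ▸ Finset.mem_insert_self _ _)
    · -- C B
      exfalso
      simp only [Φ] at hval
      split_ifs at hval with hw
      · exact Z_notmem_insert_Y (by omega) (hval ▸ Finset.mem_insert_self _ _)
      · rcases factsB T'.2.2 with hX | hW
        · exact X_notmem_insert_Y (by omega) (hval.symm ▸ Finset.mem_insert_of_mem hX)
        · have : Wv v n ∈ insert (Y V n) (T.1.map (pemb V (by omega : n ≤ n+3))) :=
            hval.symm ▸ Finset.mem_insert_of_mem hW
          rcases Finset.mem_insert.1 this with h1 | h2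
          · exact Wv_ne_Y h1
          · exact hw h2
    · -- C C
      simp only [Φ] at hval
      split_ifs at hval with hw hw'
      · have hmm : T.1.map (pemb V (by omega : n ≤ n+3)) =
            T'.1.map (pemb V (by omega : n ≤ n+3)) := by
          have h1 := congrArg (fun s => Finset.erase s (Z V n)) hval
          simpa only [Finset.erase_insert (Z_notmem_map (n := n) (k := n) (h := by omega) (T := T.1) (by omega)),
            Finset.erase_insert (Z_notmem_map (n := n) (k := n) (h := by omega) (T := T'.1) (by omega))] using h1
        exact congrArg (Sum.inr ∘ Sum.inr) (Subtype.ext (Finset.map_injective _ hmm))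
      · exact absurd (hval ▸ Finset.mem_insert_self _ _) (Z_notmem_insert_Y (by omega))
      · exact absurd (hval.symm ▸ Finset.mem_insert_self _ _) (Z_notmem_insert_Y (by omega))
      · have hmm : T.1.map (pemb V (by omega : n ≤ n+3)) =
            T'.1.map (pemb V (by omega : n ≤ n+3)) := by
          have h1 := congrArg (fun s => Finset.erase s (Y V n)) hval
          simpa only [Finset.erase_insert (Y_notmem_map (n := n) (k := n) (h := by omega) (T := T.1) (by omega)),
            Finset.erase_insert (Y_notmem_map (n := n) (k := n) (h := by omega) (T := T'.1) (by omega))] using h1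
        exact congrArg (Sum.inr ∘ Sum.inr) (Subtype.ext (Finset.map_injective _ hmm))
  have hsurj : Function.Surjective Φ := by
    rintro ⟨U, hUc, hUd⟩
    have hZY : Z V n ∈ U ∨ Y V n ∈ U := by
      rcases hUd (Z V n) with h | ⟨u, hu, hadj⟩
      · exact Or.inl h
      · exact Or.inr (adj_Z.1 hadj ▸ hu)
    by_cases hZ : Z V n ∈ U
    · by_cases hYX : Y V n ∈ U ∨ X V n ∈ U
      · obtain ⟨T, hT, hdomT⟩ := surjA hUd hYX
        have hTc : T.card = i := by
          have hc := congrArg Finset.card hT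
          rw [Finset.card_map, Finset.card_erase_of_mem hZ, hUc] at hc
          omega
        refine ⟨.inl ⟨T, hTc, hdomT⟩, Subtype.ext ?_⟩
        show insert (Z V n) (T.map _) = U
        rw [hT, Finset.insert_erase hZ]
      · push_neg at hYX
        obtain ⟨hWv, T, hT, hdomT⟩ := surjCtrue hUd hZ hYX.1 hYX.2
        have hTc : T.card = i := by
          have hc := congrArg Finset.card hT
          rw [Finset.card_map, Finset.card_erase_of_mem hZ, hUc] at hc
          omega
        refine ⟨.inr (.inr ⟨T, hTc, hdomT⟩), Subtype.ext ?_⟩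
        show insert (if Wv v n ∈ T.map _ then Z V n else Y V n) (T.map _) = U
        rw [if_pos (hT ▸ Finset.mem_erase.2 ⟨Wv_ne_Z, hWv⟩), hT, Finset.insert_erase hZ]
    · have hY : Y V n ∈ U := hZY.resolve_left hZ
      by_cases hXW : X V n ∈ U ∨ Wv v n ∈ U
      · obtain ⟨T, hT, hdomT⟩ := surjB hUd hZ hY hXW
        have hTc : T.card = i := by
          have hc := congrArg Finset.card hT
          rw [Finset.card_map, Finset.card_erase_of_mem hY, hUc] at hc
          omega
        refine ⟨.inr (.inl ⟨T, hTc, hdomT⟩), Subtype.ext ?_⟩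
        show insert (Y V n) (T.map _) = U
        rw [hT, Finset.insert_erase hY]
      · push_neg at hXW
        obtain ⟨T, hT, hdomT⟩ := surjCfalse hUd hZ hY hXW.1 hXW.2
        have hTc : T.card = i := by
          have hc := congrArg Finset.card hT
          rw [Finset.card_map, Finset.card_erase_of_mem hY, hUc] at hc
          omega
        refine ⟨.inr (.inr ⟨T, hTc, hdomT⟩), Subtype.ext ?_⟩
        show insert (if Wv v n ∈ T.map _ then Z V n else Y V n) (T.map _) = U
        rw [if_neg (fun hm => hXW.2 (Finset.mem_of_mem_erase (hT ▸ hm))), hT,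
          Finset.insert_erase hY]
  have hcard : Nat.card M = Nat.card (MA ⊕ MB ⊕ MC) :=
    Nat.card_congr (Equiv.ofBijective Φ ⟨hinj, hsurj⟩).symm
  have hsum : Nat.card (MA ⊕ MB ⊕ MC) = Nat.card MA + (Nat.card MB + Nat.card MC) := by
    rw [Nat.card_sum, Nat.card_sum]
  show Nat.card M = Nat.card MA + Nat.card MB + Nat.card MC
  rw [hcard, hsum]
  ring

lemma shift_step {e0 e1 e2 e3 s : ℕ → ℕ} {m0 m1 m2 m3 : ℕ}
    (h0 : UnimodalWithMode e0 m0) (h1 : UnimodalWithMode e1 m1)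
    (h2 : UnimodalWithMode e2 m2) (h3 : UnimodalWithMode e3 m3)
    (hs0 : s 0 = 0) (hs : ∀ i, s (i+1) = e3 i + e2 i + e1 i)
    (he3 : ∀ i, e3 (i+1) = e2 i + e1 i + e0 i)
    (h01 : m0 ≤ m1) (h12 : m1 ≤ m2) (h12' : m2 ≤ m1 + 1)
    (h23 : m2 ≤ m3) (h23' : m3 ≤ m2 + 1) :
    ∃ m4, UnimodalWithMode s m4 ∧ m3 ≤ m4 ∧ m4 ≤ m3 + 1 := by
  obtain ⟨h3a, h3b⟩ := h3
  obtain ⟨h2a, h2b⟩ := h2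
  obtain ⟨h1a, h1b⟩ := h1
  obtain ⟨h0a, h0b⟩ := h0
  have inc : ∀ i < m1 + 1, s i ≤ s (i + 1) := by
    intro i hi
    match i with
    | 0 => rw [hs0]; exact Nat.zero_le _
    | (j+1) =>
      rw [hs j, hs (j+1)]
      have a3 := h3a j (by omega)
      have a2 := h2a j (by omega)
      have a1 := h1a j (by omega)
      omega
  have dec : ∀ i, m3 + 1 ≤ i → s (i + 1) ≤ s i := by
    intro i hi
    obtain ⟨j, rfl⟩ : ∃ j, i = j + 1 := ⟨i - 1, by omega⟩
    rw [hs j, hs (j+1)]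
    have a3 := h3b (j+1) (by omega)
    have a2 := h2b (j+1) (by omega)
    have a1 := h1b (j+1) (by omega)
    have b3 := h3b j (by omega)
    have b2 := h2b j (by omega)
    have b1 := h1b j (by omega)
    omega
  have grow : ∀ i < m3, s i ≤ s (i + 1) := by
    intro i hi
    by_cases hcase : i < m1 + 1
    · exact inc i hcase
    · -- then m3 = m1 + 2, m2 = m1 + 1, i = m1 + 1
      have hm3 : m3 = m1 + 2 := by omega
      have hieq : i = m1 + 1 := by omega
      subst hieq
      rw [hs m1, hs (m1+1)]
      have a3 : e3 m1 ≤ e3 (m1+1) := h3a m1 (by omega)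
      have h4 : e3 (m1+1) ≤ e3 (m1+2) := h3a (m1+1) (by omega)
      rw [he3 m1, he3 (m1+1)] at h4
      have a0 : e0 (m1+1) ≤ e0 m1 := h0b m1 (by omega)
      omega
  by_cases hC : s (m3 + 1) ≤ s m3
  · refine ⟨m3, ⟨grow, ?_⟩, le_refl _, by omega⟩
    intro i hi
    rcases Nat.eq_or_lt_of_le hi with rfl | hlt
    · exact hC
    · exact dec i hlt
  · refine ⟨m3 + 1, ⟨?_, dec⟩, by omega, le_refl _⟩
    intro i hi
    by_cases h : i < m3
    · exact grow i h
    · have : i = m3 := by omega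
      subst this
      omega

end AuxUnimodalPathAttach

theorem unimodal_pathAttach {V : Type*} [Fintype V] (G : SimpleGraph V) (v : V) (μ : ℕ → ℕ)
    (hmode : ∀ i, i ≤ 3 → UnimodalWithMode (domCount (pathAttach G v i)) (μ i))
    (hdiff : ∀ i, 1 ≤ i → i ≤ 3 → μ (i - 1) ≤ μ i ∧ μ i ≤ μ (i - 1) + 1) :
    ∀ l : ℕ, UnimodalSeq (domCount (pathAttach G v l)) := by

  have key : ∀ k : ℕ, ∃ m0 m1 m2 m3 : ℕ,
      UnimodalWithMode (domCount (pathAttach G v k)) m0 ∧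
      UnimodalWithMode (domCount (pathAttach G v (k+1))) m1 ∧
      UnimodalWithMode (domCount (pathAttach G v (k+2))) m2 ∧
      UnimodalWithMode (domCount (pathAttach G v (k+3))) m3 ∧
      m0 ≤ m1 ∧ m1 ≤ m2 ∧ m2 ≤ m1 + 1 ∧ m2 ≤ m3 ∧ m3 ≤ m2 + 1 := by
    intro k
    induction k with
    | zero =>
      exact ⟨μ 0, μ 1, μ 2, μ 3, hmode 0 (by omega), hmode 1 (by omega),
        hmode 2 (by omega), hmode 3 (by omega),
        (hdiff 1 (by omega) (by omega)).1, (hdiff 2 (by omega) (by omega)).1,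
        (hdiff 2 (by omega) (by omega)).2, (hdiff 3 (by omega) (by omega)).1,
        (hdiff 3 (by omega) (by omega)).2⟩
    | succ k ih =>
      obtain ⟨m0, m1, m2, m3, u0, u1, u2, u3, g01, g12, g12', g23, g23'⟩ := ih
      obtain ⟨m4, u4, g34, g34'⟩ := shift_step u0 u1 u2 u3
        (domCount_zero G v (k+4))
        (fun i => domCount_rec G v (k+1) i)
        (fun i => domCount_rec G v k i)
        g01 g12 g12' g23 g23'
      exact ⟨m1, m2, m3, m4, u1, u2, u3, u4, g12, g23, g23', g34, g34'⟩
  intro l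
  obtain ⟨m0, m1, m2, m3, u0, -⟩ := key l
  exact ⟨m0, u0⟩
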